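/- Let the descriptor system (E,A,B,C,D) be completely observable. Then every matrix Q ∈ ℝ^{n×n} such that [[A^T Q + Q^T A, Q^T B − C^T],[B^T Q − C, −D − D^T]] is negative semidefinite and E^T Q is symmetric positive semidefinite is invertible; consequently, the system is port-Hamiltonian if and only if there exists Q ∈ ℝ^{n×n} satisfying the KYP inequality together with E^T Q symmetric positive semidefinite. -/

import Mathlib

open Matrix
open scoped ComplexOrder

/-- View a real matrix as a complex matrix. -/
noncomputable def toC {k l : Type*} (M : Matrix k l ℝ) : Matrix k l ℂ :=
  M.map (fun x => (x : ℂ))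

/-- The matrix pencil `s E - A`, viewed over `ℂ`. -/
noncomputable def pencil {n : ℕ} (E A : Matrix (Fin n) (Fin n) ℝ) (s : ℂ) :
    Matrix (Fin n) (Fin n) ℂ :=
  s • toC E - toC A

/-- The transfer function `T(s) = C (sE - A)⁻¹ B + D` of the descriptor system. -/
noncomputable def transfer {n m : ℕ} (E A : Matrix (Fin n) (Fin n) ℝ)
    (B : Matrix (Fin n) (Fin m) ℝ) (C : Matrix (Fin m) (Fin n) ℝ)
    (D : Matrix (Fin m) (Fin m) ℝ) (s : ℂ) : Matrix (Fin m) (Fin m) ℂ :=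
  toC C * (pencil E A s)⁻¹ * toC B + toC D

/-- A descriptor system is positive real if the pencil is invertible on the open right
half-plane and `T(s) + T(s)ᴴ` is positive semidefinite there. -/
def PositiveReal {n m : ℕ} (E A : Matrix (Fin n) (Fin n) ℝ)
    (B : Matrix (Fin n) (Fin m) ℝ) (C : Matrix (Fin m) (Fin n) ℝ)
    (D : Matrix (Fin m) (Fin m) ℝ) : Prop :=
  ∀ s : ℂ, 0 < s.re → (pencil E A s).det ≠ 0 ∧
    (transfer E A B C D s + (transfer E A B C D s)ᴴ).PosSemidef

/-- Complete controllability: `[αE - βA, B]` has full row rank for all `(α,β) ≠ (0,0)`. -/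
def CompletelyControllable {n m : ℕ} (E A : Matrix (Fin n) (Fin n) ℝ)
    (B : Matrix (Fin n) (Fin m) ℝ) : Prop :=
  ∀ α β : ℂ, ¬(α = 0 ∧ β = 0) →
    (fromCols (α • toC E - β • toC A) (toC B)).rank = n

/-- Complete observability: `[αE - βA; C]` has full column rank for all `(α,β) ≠ (0,0)`. -/
def CompletelyObservable {n m : ℕ} (E A : Matrix (Fin n) (Fin n) ℝ)
    (C : Matrix (Fin m) (Fin n) ℝ) : Prop :=
  ∀ α β : ℂ, ¬(α = 0 ∧ β = 0) →
    (fromRows (α • toC E - β • toC A) (toC C)).rank = n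

/-- A descriptor system `(E,A,B,C,D)` is port-Hamiltonian if it admits a pH decomposition. -/
def IsPortHamiltonian {n m : ℕ} (E A : Matrix (Fin n) (Fin n) ℝ)
    (B : Matrix (Fin n) (Fin m) ℝ) (C : Matrix (Fin m) (Fin n) ℝ)
    (D : Matrix (Fin m) (Fin m) ℝ) : Prop :=
  ∃ (J R Q : Matrix (Fin n) (Fin n) ℝ) (G P : Matrix (Fin n) (Fin m) ℝ),
    A = (J - R) * Q ∧ B = G - P ∧ C = (G + P)ᵀ * Q ∧ Jᵀ = -J ∧
    (Eᵀ * Q).PosSemidef ∧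
    (fromBlocks (Qᵀ * R * Q) (Qᵀ * P) (Pᵀ * Q) ((1/2 : ℝ) • (D + Dᵀ))).PosSemidef

/-- The KYP block matrix `[[AᵀQ + QᵀA, QᵀB - Cᵀ], [BᵀQ - C, -D - Dᵀ]]`. -/
def KYPmatrix {n m : ℕ} (A : Matrix (Fin n) (Fin n) ℝ)
    (B : Matrix (Fin n) (Fin m) ℝ) (C : Matrix (Fin m) (Fin n) ℝ)
    (D : Matrix (Fin m) (Fin m) ℝ) (Q : Matrix (Fin n) (Fin n) ℝ) :
    Matrix (Fin n ⊕ Fin m) (Fin n ⊕ Fin m) ℝ :=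
  fromBlocks (Aᵀ * Q + Qᵀ * A) (Qᵀ * B - Cᵀ) (Bᵀ * Q - C) (-D - Dᵀ)


section Aux

lemma toC_add {k l : Type*} (M N : Matrix k l ℝ) : toC (M + N) = toC M + toC N := by
  ext i j; simp [toC]

lemma toC_sub {k l : Type*} (M N : Matrix k l ℝ) : toC (M - N) = toC M - toC N := by
  ext i j; simp [toC]

lemma toC_neg {k l : Type*} (M : Matrix k l ℝ) : toC (-M) = -toC M := by
  ext i j; simp [toC]

lemma toC_mul {k l p : Type*} [Fintype l] (M : Matrix k l ℝ) (N : Matrix l p ℝ) :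
    toC (M * N) = toC M * toC N :=
  Matrix.map_mul (f := Complex.ofRealHom)

lemma toC_transpose {k l : Type*} (M : Matrix k l ℝ) : toC Mᵀ = (toC M)ᵀ := rfl

lemma toC_conjTranspose {k l : Type*} (M : Matrix k l ℝ) : (toC M)ᴴ = toC Mᵀ := by
  ext i j; simp [toC, conjTranspose_apply, Complex.conj_ofReal]

lemma toC_det {n : ℕ} (M : Matrix (Fin n) (Fin n) ℝ) : (toC M).det = (M.det : ℂ) :=
  (RingHom.map_det Complex.ofRealHom M).symm

lemma toC_posSemidef {k : Type*} [Fintype k] [DecidableEq k] {M : Matrix k k ℝ}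
    (h : M.PosSemidef) : (toC M).PosSemidef := by
  obtain ⟨N, rfl⟩ : ∃ N : Matrix k k ℝ, M = Nᴴ * N := by
    open scoped MatrixOrder in
    exact CStarAlgebra.nonneg_iff_eq_star_mul_self.mp h.nonneg
  rw [toC_mul]
  have h2 : toC Nᴴ = (toC N)ᴴ := by
    rw [toC_conjTranspose, conjTranspose_eq_transpose_of_trivial]
  rw [h2]
  exact posSemidef_conjTranspose_mul_self _

lemma rank_full_inj {k : Type*} [Fintype k] {n : ℕ} (M : Matrix k (Fin n) ℂ)
    (h : M.rank = n) {x : Fin n → ℂ} (hx : M *ᵥ x = 0) : x = 0 := by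
  have h1 := LinearMap.finrank_range_add_finrank_ker M.mulVecLin
  have h2 : Module.finrank ℂ (Fin n → ℂ) = n := Module.finrank_fin_fun ℂ
  have h3 : Module.finrank ℂ (LinearMap.range M.mulVecLin) = n := h
  have h4 : Module.finrank ℂ (LinearMap.ker M.mulVecLin) = 0 := by omega
  have h5 : LinearMap.ker M.mulVecLin = ⊥ := Submodule.finrank_eq_zero.mp h4
  have h6 : x ∈ LinearMap.ker M.mulVecLin := by
    simp [LinearMap.mem_ker, mulVecLin_apply, hx]
  rw [h5] at h6
  simpa using h6

lemma posSemidef_smul_half {k : Type*} [Fintype k] {M : Matrix k k ℝ}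
    (h : M.PosSemidef) : ((1/2 : ℝ) • M).PosSemidef := by
  refine posSemidef_iff_dotProduct_mulVec.mpr ⟨?_, fun x => ?_⟩
  · have h1 := h.1
    unfold Matrix.IsHermitian at *
    rw [conjTranspose_smul, h1]
    norm_num
  · rw [smul_mulVec, dotProduct_smul]
    have := h.dotProduct_mulVec_nonneg x
    positivity

lemma kyp_kernel_facts {n m : ℕ} {E A : Matrix (Fin n) (Fin n) ℝ}
    {B : Matrix (Fin n) (Fin m) ℝ} {C : Matrix (Fin m) (Fin n) ℝ}
    {D : Matrix (Fin m) (Fin m) ℝ} {Q : Matrix (Fin n) (Fin n) ℝ}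
    (hK : (-(KYPmatrix A B C D Q)).PosSemidef) (hEQ : (Eᵀ * Q).PosSemidef)
    (x : Fin n → ℂ) (hx : toC Q *ᵥ x = 0) :
    toC C *ᵥ x = 0 ∧ toC Qᵀ *ᵥ (toC A *ᵥ x) = 0 ∧ toC Qᵀ *ᵥ (toC E *ᵥ x) = 0 := by
  have hE : toC Qᵀ *ᵥ (toC E *ᵥ x) = 0 := by
    have hsym : Qᵀ * E = Eᵀ * Q := by
      calc Qᵀ * E = (Eᵀ * Q)ᵀ := by rw [transpose_mul, transpose_transpose]
      _ = Eᵀ * Q := by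
          rw [← conjTranspose_eq_transpose_of_trivial]; exact hEQ.1
    rw [mulVec_mulVec, ← toC_mul, hsym, toC_mul, ← mulVec_mulVec, hx, mulVec_zero]
  have hHb : toC (-(KYPmatrix A B C D Q)) =
      fromBlocks (toC (-(Aᵀ * Q + Qᵀ * A))) (toC (Cᵀ - Qᵀ * B))
        (toC (C - Bᵀ * Q)) (toC (D + Dᵀ)) := by
    have hre : -(KYPmatrix A B C D Q) =
        fromBlocks (-(Aᵀ * Q + Qᵀ * A)) (Cᵀ - Qᵀ * B) (C - Bᵀ * Q) (D + Dᵀ) := by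
      rw [KYPmatrix, fromBlocks_neg]
      congr 1 <;> abel
    rw [hre]
    exact Matrix.fromBlocks_map _ _ _ _ _
  set y : (Fin n ⊕ Fin m) → ℂ := Sum.elim x 0 with hy
  have hmul : toC (-(KYPmatrix A B C D Q)) *ᵥ y =
      Sum.elim (-(toC Qᵀ *ᵥ (toC A *ᵥ x))) (toC C *ᵥ x) := by
    rw [hHb, hy, fromBlocks_mulVec]
    simp only [Sum.elim_comp_inl, Sum.elim_comp_inr]
    simp only [mulVec_zero, add_zero, toC_neg, toC_add, toC_sub, toC_mul, neg_mulVec,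
      add_mulVec, sub_mulVec, ← mulVec_mulVec, hx, zero_add, sub_zero]
  have hquad : star y ⬝ᵥ (toC (-(KYPmatrix A B C D Q)) *ᵥ y) = 0 := by
    rw [hmul, hy]
    have hstar : star (Sum.elim x (0 : Fin m → ℂ)) = Sum.elim (star x) 0 := by
      funext i; cases i <;> simp [Pi.star_apply]
    rw [hstar, sumElim_dotProduct_sumElim, zero_dotProduct, add_zero, dotProduct_neg,
      ← toC_conjTranspose, dotProduct_mulVec, ← star_mulVec, hx, star_zero,
      zero_dotProduct, neg_zero]
  have hzero : toC (-(KYPmatrix A B C D Q)) *ᵥ y = 0 :=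
    ((toC_posSemidef hK).dotProduct_mulVec_zero_iff y).mp hquad
  have heq := hmul.symm.trans hzero
  refine ⟨?_, ?_, hE⟩
  · funext i; exact congrFun heq (Sum.inr i)
  · have : -(toC Qᵀ *ᵥ (toC A *ᵥ x)) = 0 := by
      funext i; exact congrFun heq (Sum.inl i)
    simpa [neg_eq_zero] using this

lemma kyp_isUnit {n m : ℕ} {E A : Matrix (Fin n) (Fin n) ℝ}
    {B : Matrix (Fin n) (Fin m) ℝ} {C : Matrix (Fin m) (Fin n) ℝ}
    {D : Matrix (Fin m) (Fin m) ℝ} (hobs : CompletelyObservable E A C)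
    (Q : Matrix (Fin n) (Fin n) ℝ)
    (hK : (-(KYPmatrix A B C D Q)).PosSemidef) (hEQ : (Eᵀ * Q).PosSemidef) :
    IsUnit Q := by
  by_contra hQ
  -- contradiction helper from observability
  have contra : ∀ (α β : ℂ) (x : Fin n → ℂ), ¬(α = 0 ∧ β = 0) → x ≠ 0 →
      (α • toC E - β • toC A) *ᵥ x = 0 → toC C *ᵥ x = 0 → False := by
    intro α β x hab hx0 h1 h2
    apply hx0
    apply rank_full_inj _ (hobs α β hab)
    rw [fromRows_mulVec, h1, h2]
    funext i; cases i <;> rfl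
  -- Q is singular over ℂ
  have hdet : Q.det = 0 := by
    by_contra h
    exact hQ ((Matrix.isUnit_iff_isUnit_det Q).mpr (isUnit_iff_ne_zero.mpr h))
  have hdetC : (toC Q).det = 0 := by rw [toC_det, hdet, Complex.ofReal_zero]
  obtain ⟨v, hv0, hv⟩ := (Matrix.exists_mulVec_eq_zero_iff).mpr hdetC
  -- kernels
  set K := LinearMap.ker (toC Q).mulVecLin with hKdef
  set K' := LinearMap.ker (toC Qᵀ).mulVecLin with hK'def
  have memK : ∀ z : Fin n → ℂ, z ∈ K ↔ toC Q *ᵥ z = 0 := by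
    intro z; simp [hKdef, LinearMap.mem_ker, mulVecLin_apply]
  have hvK : v ∈ K := (memK v).mpr hv
  -- restricted maps
  have hmapA : ∀ z ∈ K, (toC A).mulVecLin z ∈ K' := by
    intro z hz
    simp only [hK'def, LinearMap.mem_ker, mulVecLin_apply]
    exact (kyp_kernel_facts hK hEQ z ((memK z).mp hz)).2.1
  have hmapE : ∀ z ∈ K, (toC E).mulVecLin z ∈ K' := by
    intro z hz
    simp only [hK'def, LinearMap.mem_ker, mulVecLin_apply]
    exact (kyp_kernel_facts hK hEQ z ((memK z).mp hz)).2.2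
  have hCK : ∀ z ∈ K, toC C *ᵥ z = 0 := fun z hz =>
    (kyp_kernel_facts hK hEQ z ((memK z).mp hz)).1
  let φA : K →ₗ[ℂ] K' := ((toC A).mulVecLin).restrict hmapA
  let φE : K →ₗ[ℂ] K' := ((toC E).mulVecLin).restrict hmapE
  -- equal dimensions
  have hfr : Module.finrank ℂ K = Module.finrank ℂ K' := by
    have r1 := LinearMap.finrank_range_add_finrank_ker (toC Q).mulVecLin
    have r2 := LinearMap.finrank_range_add_finrank_ker (toC Qᵀ).mulVecLin
    have hfin : Module.finrank ℂ (Fin n → ℂ) = n := Module.finrank_fin_fun ℂ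
    rw [hfin] at r1 r2
    rw [← hKdef] at r1
    rw [← hK'def] at r2
    have hrk : (toC Qᵀ).rank = (toC Q).rank := by
      rw [toC_transpose]; exact rank_transpose _
    have e1 : (toC Q).rank = Module.finrank ℂ (LinearMap.range (toC Q).mulVecLin) := rfl
    have e2 : (toC Qᵀ).rank = Module.finrank ℂ (LinearMap.range (toC Qᵀ).mulVecLin) := rfl
    rw [e1, e2] at hrk
    omega
  by_cases hinj : Function.Injective φE
  · -- φE bijective; eigenvalue argument
    have hsurj : Function.Surjective φE :=
      (LinearMap.injective_iff_surjective_of_finrank_eq_finrank hfr).mp hinj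
    let e : K ≃ₗ[ℂ] K' := LinearEquiv.ofBijective φE ⟨hinj, hsurj⟩
    let ψ : Module.End ℂ K := (e.symm : K' →ₗ[ℂ] K) ∘ₗ φA
    haveI : Nontrivial K := by
      refine nontrivial_of_ne ⟨v, hvK⟩ 0 ?_
      intro h
      exact hv0 (congrArg Subtype.val h)
    obtain ⟨μ, hμ⟩ := Module.End.exists_eigenvalue ψ
    obtain ⟨z, hz⟩ := hμ.exists_hasEigenvector
    have hz0 : (z : Fin n → ℂ) ≠ 0 := fun h => hz.right (Subtype.ext h)
    have h1 : ψ z = μ • z := hz.apply_eq_smul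
    have h2 : φA z = μ • φE z := by
      have : e.symm (φA z) = μ • z := h1
      have h3 : φA z = e (μ • z) := by
        rw [← this, LinearEquiv.apply_symm_apply]
      rw [h3, _root_.map_smul]
      rfl
    -- translate to vectors
    have h4 : toC A *ᵥ (z : Fin n → ℂ) = μ • (toC E *ᵥ (z : Fin n → ℂ)) := by
      have := congrArg (Subtype.val) h2
      simpa [φA, φE, LinearMap.restrict_apply, mulVecLin_apply] using this
    refine contra μ 1 z (by simp) hz0 ?_ (hCK z z.2)
    rw [sub_mulVec, smul_mulVec, smul_mulVec, one_smul, h4, sub_self]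
  · -- φE has nontrivial kernel
    rw [← LinearMap.ker_eq_bot] at hinj
    obtain ⟨z, hzker, hz0⟩ := Submodule.exists_mem_ne_zero_of_ne_bot hinj
    have hz0' : (z : Fin n → ℂ) ≠ 0 := fun h => hz0 (Subtype.ext h)
    have hEz : toC E *ᵥ (z : Fin n → ℂ) = 0 := by
      have := congrArg (Subtype.val) (LinearMap.mem_ker.mp hzker)
      simpa [φE, LinearMap.restrict_apply, mulVecLin_apply] using this
    refine contra 1 0 z (by simp) hz0' ?_ (hCK z z.2)
    rw [sub_mulVec, smul_mulVec, smul_mulVec, one_smul, zero_smul, hEz]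
    simp

-- forward: pH implies KYP solution
lemma kyp_of_pH {n m : ℕ} {E A : Matrix (Fin n) (Fin n) ℝ}
    {B : Matrix (Fin n) (Fin m) ℝ} {C : Matrix (Fin m) (Fin n) ℝ}
    {D : Matrix (Fin m) (Fin m) ℝ} (h : IsPortHamiltonian E A B C D) :
    ∃ Q : Matrix (Fin n) (Fin n) ℝ,
      (-(KYPmatrix A B C D Q)).PosSemidef ∧ (Eᵀ * Q).PosSemidef := by
  obtain ⟨J, R, Q, G, P, hA, hB, hC, hJ, hEQ, hW⟩ := h
  refine ⟨Q, ?_, hEQ⟩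
  set W := fromBlocks (Qᵀ * R * Q) (Qᵀ * P) (Pᵀ * Q) ((1/2 : ℝ) • (D + Dᵀ)) with hWdef
  have h11 : -(Aᵀ * Q + Qᵀ * A) = Qᵀ * R * Q + (Qᵀ * R * Q)ᵀ := by
    rw [hA, transpose_mul, transpose_sub, hJ]
    simp only [transpose_mul, transpose_transpose, sub_mul, mul_sub, add_mul, mul_add,
      Matrix.mul_assoc, Matrix.neg_mul, Matrix.mul_neg, sub_neg_eq_add]
    abel
  have h12 : -(Qᵀ * B - Cᵀ) = Qᵀ * P + (Pᵀ * Q)ᵀ := by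
    rw [hB, hC]
    simp only [transpose_mul, transpose_transpose, transpose_add, Matrix.mul_sub,
      Matrix.mul_add]
    abel
  have h21 : -(Bᵀ * Q - C) = Pᵀ * Q + (Qᵀ * P)ᵀ := by
    rw [hB, hC]
    simp only [transpose_mul, transpose_transpose, transpose_add, transpose_sub,
      Matrix.sub_mul, Matrix.add_mul]
    abel
  have h22 : -(-D - Dᵀ) = (1/2 : ℝ) • (D + Dᵀ) + ((1/2 : ℝ) • (D + Dᵀ))ᵀ := by
    rw [transpose_smul, transpose_add, transpose_transpose]
    ext i j
    simp [Matrix.add_apply, Matrix.smul_apply, Matrix.neg_apply, Matrix.sub_apply]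
    ring
  have key : -(KYPmatrix A B C D Q) = W + Wᵀ := by
    rw [KYPmatrix, fromBlocks_neg, h11, h12, h21, h22, hWdef, fromBlocks_transpose,
      fromBlocks_add]
  rw [key]
  exact hW.add hW.transpose

lemma pH_of_kyp {n m : ℕ} {E A : Matrix (Fin n) (Fin n) ℝ}
    {B : Matrix (Fin n) (Fin m) ℝ} {C : Matrix (Fin m) (Fin n) ℝ}
    {D : Matrix (Fin m) (Fin m) ℝ} {Q : Matrix (Fin n) (Fin n) ℝ}
    (hQ : IsUnit Q) (hK : (-(KYPmatrix A B C D Q)).PosSemidef)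
    (hEQ : (Eᵀ * Q).PosSemidef) : IsPortHamiltonian E A B C D := by
  have hdet : IsUnit Q.det := (Matrix.isUnit_iff_isUnit_det Q).mp hQ
  have hdetT : IsUnit Qᵀ.det := by rwa [Matrix.det_transpose]
  have hQiQ : Q⁻¹ * Q = 1 := Matrix.nonsing_inv_mul Q hdet
  have hQQi : Q * Q⁻¹ = 1 := Matrix.mul_nonsing_inv Q hdet
  have hQTi : Qᵀ * (Qᵀ)⁻¹ = 1 := Matrix.mul_nonsing_inv Qᵀ hdetT
  have hQiT : ((Qᵀ)⁻¹)ᵀ = Q⁻¹ := by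
    rw [← Matrix.transpose_nonsing_inv, transpose_transpose]
  set X := A * Q⁻¹ with hX
  set Y := (Qᵀ)⁻¹ * Cᵀ with hY
  refine ⟨(1/2 : ℝ) • (X - Xᵀ), -((1/2 : ℝ) • (X + Xᵀ)), Q,
    (1/2 : ℝ) • (B + Y), (1/2 : ℝ) • (Y - B), ?_, ?_, ?_, ?_, hEQ, ?_⟩
  · -- A = (J - R) * Q
    have h1 : (1/2 : ℝ) • (X - Xᵀ) - -((1/2 : ℝ) • (X + Xᵀ)) = X := by
      ext i j
      simp [Matrix.sub_apply, Matrix.add_apply, Matrix.smul_apply, Matrix.neg_apply]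
      ring
    rw [h1, hX, Matrix.mul_assoc, hQiQ, Matrix.mul_one]
  · -- B = G - P
    ext i j
    simp [Matrix.sub_apply, Matrix.add_apply, Matrix.smul_apply]
    ring
  · -- C = (G + P)ᵀ * Q
    have h1 : (1/2 : ℝ) • (B + Y) + (1/2 : ℝ) • (Y - B) = Y := by
      ext i j
      simp [Matrix.sub_apply, Matrix.add_apply, Matrix.smul_apply]
      ring
    rw [h1, hY, transpose_mul, transpose_transpose, hQiT, Matrix.mul_assoc, hQiQ,
      Matrix.mul_one]
  · -- Jᵀ = -J
    rw [transpose_smul, transpose_sub, transpose_transpose]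
    ext i j
    simp [Matrix.sub_apply, Matrix.smul_apply, Matrix.neg_apply]
    ring
  · -- the big block is (1/2) • (-(KYPmatrix ...))
    have e1 : Qᵀ * X * Q = Qᵀ * A := by
      rw [hX, Matrix.mul_assoc, Matrix.mul_assoc, hQiQ, Matrix.mul_one]
    have e2 : Qᵀ * Xᵀ * Q = Aᵀ * Q := by
      rw [hX, transpose_mul, Matrix.transpose_nonsing_inv, ← Matrix.mul_assoc, hQTi,
        Matrix.one_mul]
    have e3 : Qᵀ * Y = Cᵀ := by
      rw [hY, ← Matrix.mul_assoc, hQTi, Matrix.one_mul]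
    have e4 : Yᵀ * Q = C := by
      rw [hY, transpose_mul, transpose_transpose, hQiT, Matrix.mul_assoc, hQiQ,
        Matrix.mul_one]
    have h11 : Qᵀ * -((1/2 : ℝ) • (X + Xᵀ)) * Q = (1/2 : ℝ) • (-(Aᵀ * Q + Qᵀ * A)) := by
      have h5 : Qᵀ * (X + Xᵀ) * Q = Qᵀ * A + Aᵀ * Q := by
        rw [Matrix.mul_add, Matrix.add_mul, e1, e2]
      rw [Matrix.mul_neg, Matrix.neg_mul, Matrix.mul_smul, Matrix.smul_mul, h5, smul_neg,
        add_comm (Qᵀ * A)]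
    have h12 : Qᵀ * ((1/2 : ℝ) • (Y - B)) = (1/2 : ℝ) • (-(Qᵀ * B - Cᵀ)) := by
      rw [Matrix.mul_smul, Matrix.mul_sub, e3, neg_sub]
    have h21 : ((1/2 : ℝ) • (Y - B))ᵀ * Q = (1/2 : ℝ) • (-(Bᵀ * Q - C)) := by
      rw [transpose_smul, Matrix.smul_mul, transpose_sub, Matrix.sub_mul, e4, neg_sub]
    have h22 : ((1/2 : ℝ) • (D + Dᵀ)) = (1/2 : ℝ) • (-(-D - Dᵀ)) := by
      rw [show -(-D - Dᵀ) = D + Dᵀ by abel]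
    have hW : fromBlocks (Qᵀ * -((1/2 : ℝ) • (X + Xᵀ)) * Q)
        (Qᵀ * ((1/2 : ℝ) • (Y - B))) (((1/2 : ℝ) • (Y - B))ᵀ * Q)
        ((1/2 : ℝ) • (D + Dᵀ)) = (1/2 : ℝ) • (-(KYPmatrix A B C D Q)) := by
      rw [h11, h12, h21, h22, KYPmatrix, fromBlocks_neg, Matrix.fromBlocks_smul]
    rw [hW]
    exact posSemidef_smul_half hK

end Aux

/-- For a completely observable system, every KYP solution `Q` with
`EᵀQ ≥ 0` is invertible, and the system is pH iff a KYP solution exists. -/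
theorem observable_KYP_invertible_and_pH_iff {n m : ℕ}
    (E A : Matrix (Fin n) (Fin n) ℝ) (B : Matrix (Fin n) (Fin m) ℝ)
    (C : Matrix (Fin m) (Fin n) ℝ) (D : Matrix (Fin m) (Fin m) ℝ)
    (hobs : CompletelyObservable E A C) :
    (∀ Q : Matrix (Fin n) (Fin n) ℝ,
      (-(KYPmatrix A B C D Q)).PosSemidef → (Eᵀ * Q).PosSemidef → IsUnit Q) ∧
    (IsPortHamiltonian E A B C D ↔
      ∃ Q : Matrix (Fin n) (Fin n) ℝ,
        (-(KYPmatrix A B C D Q)).PosSemidef ∧ (Eᵀ * Q).PosSemidef) := by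
  
  constructor
  · exact fun Q hK hEQ => kyp_isUnit hobs Q hK hEQ
  · constructor
    · exact fun h => kyp_of_pH h
    · rintro ⟨Q, hK, hEQ⟩
      exact pH_of_kyp (kyp_isUnit hobs Q hK hEQ) hK hEQ
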